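/- For every r > 1 there exists p > 2 such that 4 · r^{-r(p-2)/(p(r-1))} · Γ(1/p) · Γ(2 − 1/p) < 2π; that is, the inequality 2π ≤ 4 r^{-r(p-2)/(p(r-1))} Γ(1/p) Γ(2 − 1/p), which holds with equality at p = 2, fails for some p > 2 arbitrarily close to 2. -/

import Mathlib

open Real

/-- For every `r > 1`, the inequality
`2π ≤ 4 r^(-r(p-2)/(p(r-1))) Γ(1/p) Γ(2-1/p)`, which holds with equality at
`p = 2`, fails for some `p > 2` arbitrarily close to `2`. -/
theorem gamma_inequality_fails_near_two (r : ℝ) (hr : 1 < r) :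
    4 * Real.Gamma (1 / 2) * Real.Gamma (2 - 1 / 2) = 2 * π ∧
    ∀ ε : ℝ, 0 < ε → ∃ p : ℝ, 2 < p ∧ p < 2 + ε ∧
      4 * r ^ (-(r * (p - 2)) / (p * (r - 1))) * Real.Gamma (1 / p) *
          Real.Gamma (2 - 1 / p) < 2 * π := by
  constructor
  · have h1 : Real.Gamma (1 / 2) = Real.sqrt π := Real.Gamma_one_half_eq
    have h2 : Real.Gamma (2 - 1 / 2) = (1/2) * Real.Gamma (1/2) := by
      rw [show (2 : ℝ) - 1/2 = 1/2 + 1 by norm_num, Real.Gamma_add_one (by norm_num)]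
    have h3 : Real.sqrt π * Real.sqrt π = π := Real.mul_self_sqrt Real.pi_pos.le
    rw [h2, h1]; nlinarith [h3]
  intro ε hε
  have hr0 : 0 < r := lt_trans one_pos hr
  have hr1 : (0:ℝ) < r - 1 := by linarith
  -- the auxiliary function
  set h : ℝ → ℝ := fun p => Real.log r * (r / (r - 1)) * ((p - 2) / p)
      + Real.log p + Real.log (Real.sin (π / p)) - Real.log (2 * p - 2) with hh
  -- h 2 = 0
  have hh2 : h 2 = 0 := by
    simp only [hh]
    norm_num [Real.sin_pi_div_two]
  -- derivative of h at 2
  have hD : HasDerivAt h (Real.log r * (r / (r - 1)) * (1/2) - 1/2) 2 := by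
    have d1 : HasDerivAt (fun p : ℝ => (p - 2) / p)
        ((1 * 2 - (2 - 2) * 1) / (2 ^ 2)) 2 :=
      HasDerivAt.div ((hasDerivAt_id 2).sub_const 2) (hasDerivAt_id 2) two_ne_zero
    have d2 : HasDerivAt (fun p : ℝ => Real.log p) (2 : ℝ)⁻¹ 2 :=
      Real.hasDerivAt_log two_ne_zero
    have d3i : HasDerivAt (fun p : ℝ => π / p) (π * (-(2 ^ 2)⁻¹)) 2 := by
      simpa [div_eq_mul_inv] using (hasDerivAt_inv (two_ne_zero)).const_mul π
    have d3s : HasDerivAt (fun p : ℝ => Real.sin (π / p))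
        (Real.cos (π / 2) * (π * (-(2 ^ 2)⁻¹))) 2 :=
      (Real.hasDerivAt_sin (π / 2)).comp 2 d3i
    have d3 : HasDerivAt (fun p : ℝ => Real.log (Real.sin (π / p)))
        ((Real.sin (π / 2))⁻¹ * (Real.cos (π / 2) * (π * (-(2 ^ 2)⁻¹)))) 2 :=
      (Real.hasDerivAt_log (by rw [Real.sin_pi_div_two]; norm_num)).comp 2 d3s
    have d4i : HasDerivAt (fun p : ℝ => 2 * p - 2) (2 : ℝ) 2 := by
      simpa using ((hasDerivAt_id (2:ℝ)).const_mul 2).sub_const 2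
    have d4 : HasDerivAt (fun p : ℝ => Real.log (2 * p - 2))
        ((2 * 2 - 2 : ℝ)⁻¹ * 2) 2 :=
      (Real.hasDerivAt_log (by norm_num)).comp 2 d4i
    have := (((d1.const_mul (Real.log r * (r / (r - 1)))).add d2).add d3).sub d4
    refine this.congr_deriv ?_
    rw [Real.cos_pi_div_two]
    norm_num
    ring
  -- the derivative is positive
  have hlog : 1 - 1/r < Real.log r := by
    have := Real.log_lt_sub_one_of_pos (x := 1/r) (by positivity) (by
      intro hc; rw [div_eq_one_iff_eq hr0.ne'] at hc; linarith)
    rw [Real.log_div one_ne_zero hr0.ne', Real.log_one] at this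
    linarith
  have hDpos : 0 < Real.log r * (r / (r - 1)) * (1/2) - 1/2 := by
    have h1 : r - 1 < r * Real.log r := by
      have h2 := mul_lt_mul_of_pos_left hlog hr0
      have h3 : r * (1 - 1/r) = r - 1 := by field_simp
      linarith
    rw [sub_pos]
    rw [show Real.log r * (r / (r - 1)) * (1/2) = (r * Real.log r) / (r-1) * (1/2) by ring]
    have : 1 < (r * Real.log r) / (r - 1) := (one_lt_div hr1).mpr h1
    linarith
  -- from positive derivative: eventually h p > 0 for p > 2 near 2
  have hslope := hasDerivAt_iff_tendsto_slope.mp hD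
  have hev1 : ∀ᶠ p in nhdsWithin 2 (Set.Ioi 2), 0 < slope h 2 p := by
    have : ∀ᶠ p in nhdsWithin 2 {(2:ℝ)}ᶜ, 0 < slope h 2 p :=
      hslope.eventually (eventually_gt_nhds hDpos)
    exact this.filter_mono (nhdsWithin_mono 2 (fun x hx => ne_of_gt hx))
  have hev2 : ∀ᶠ p in nhdsWithin 2 (Set.Ioi 2), p ∈ Set.Ioo 2 (min (2 + ε) (5/2)) := by
    apply Ioo_mem_nhdsGT_of_mem
    exact ⟨le_refl 2, lt_min (by linarith) (by norm_num)⟩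
  obtain ⟨p, hp1, hp2⟩ := (hev1.and hev2).exists
  obtain ⟨hp2lt, hplt⟩ := hp2
  have hpε : p < 2 + ε := lt_of_lt_of_le hplt (min_le_left _ _)
  have hp52 : p < 5/2 := lt_of_lt_of_le hplt (min_le_right _ _)
  refine ⟨p, hp2lt, hpε, ?_⟩
  -- h p > 0
  have hpp : 0 < p := by linarith
  have hhp : 0 < h p := by
    have : slope h 2 p = h p / (p - 2) := by
      rw [slope_def_field, hh2]; ring
    rw [this] at hp1
    have := (div_pos_iff.mp hp1)
    rcases this with ⟨a, _⟩ | ⟨_, b⟩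
    · exact a
    · linarith
  -- basic facts
  have hS : 0 < Real.sin (π / p) := by
    apply Real.sin_pos_of_pos_of_lt_pi
    · positivity
    · rw [div_lt_iff₀ hpp]
      nlinarith [Real.pi_pos]
  -- rewrite Gammas
  have hG : Real.Gamma (1/p) * Real.Gamma (2 - 1/p)
      = (1 - 1/p) * (π / Real.sin (π / p)) := by
    have e1 : (2:ℝ) - 1/p = (1 - 1/p) + 1 := by ring
    rw [e1, Real.Gamma_add_one (by
      have : 1/p < 1 := by rw [div_lt_one hpp]; linarith
      linarith)]
    rw [show Real.Gamma (1/p) * ((1 - 1/p) * Real.Gamma (1 - 1/p))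
      = (1 - 1/p) * (Real.Gamma (1/p) * Real.Gamma (1 - 1/p)) by ring]
    rw [Real.Gamma_mul_Gamma_one_sub, mul_one_div]
  -- rewrite power
  set A : ℝ := Real.log r * (r / (r - 1)) * ((p - 2) / p) with hA
  have hpow : r ^ (-(r * (p - 2)) / (p * (r - 1))) = (Real.exp A)⁻¹ := by
    rw [Real.rpow_def_of_pos hr0, ← Real.exp_neg]
    congr 1
    rw [hA]
    field_simp
  -- key inequality from h p > 0
  have hkey : 2 * p - 2 < Real.exp A * p * Real.sin (π / p) := by
    have h2p : (0:ℝ) < 2 * p - 2 := by linarith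
    have := Real.exp_lt_exp.mpr (show Real.log (2*p-2) < A + (Real.log p + Real.log (Real.sin (π/p))) by
      simp only [hh, hA] at hhp ⊢; linarith)
    rwa [Real.exp_log h2p, Real.exp_add, Real.exp_add, Real.exp_log hpp,
      Real.exp_log hS, ← mul_assoc] at this
  -- conclude
  rw [mul_assoc, hG, hpow]
  have hE : 0 < Real.exp A := Real.exp_pos A
  have hπ : 0 < π := Real.pi_pos
  have heq : 4 * (Real.exp A)⁻¹ * ((1 - 1 / p) * (π / Real.sin (π / p)))
      = (4 * (p - 1) * π) / (Real.exp A * Real.sin (π / p) * p) := by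
    field_simp
  rw [heq, div_lt_iff₀ (by positivity)]
  nlinarith [mul_lt_mul_of_pos_left hkey (by positivity : (0:ℝ) < 2 * π)]
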